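/- Let q be a prime power, F_q the finite field with q elements, and integers 1 ≤ t ≤ ℓ ≤ m and 1 ≤ r < ℓ. Then 𝔴_r(t;ℓ,m) = q^t · 𝔴_r(t;ℓ−1,m) + (q^m − q^{t−1}) · 𝔴_r(t−1;ℓ−1,m). -/

import Mathlib

open Finset Matrix

/-- The `r`-th partial trace `τ_r(M) = Σ_{i=1}^r M_{ii}`. -/
def ptrace {K : Type} [Field K] {a b : ℕ} (r : ℕ) (M : Matrix (Fin a) (Fin b) K) : K :=
  ∑ i ∈ Finset.range r, if h : i < a ∧ i < b then M ⟨i, h.1⟩ ⟨i, h.2⟩ else 0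

/-- `wfrak K a b r t` is the number of `a × b` matrices over `K` of rank exactly `t`
with `τ_r(M) ≠ 0`, i.e. the quantity `𝔴_r(t; a, b)`. -/
noncomputable def wfrak (K : Type) [Field K] [Fintype K] (a b r t : ℕ) : ℕ :=
  Nat.card {M : Matrix (Fin a) (Fin b) K // M.rank = t ∧ ptrace r M ≠ 0}

namespace Stmt16Aux

open Module Submodule

lemma range_snoc {α : Type*} {n : ℕ} (f : Fin n → α) (a : α) :
    Set.range (Fin.snoc f a : Fin (n + 1) → α) = insert a (Set.range f) := by
  ext x
  constructor
  · rintro ⟨i, rfl⟩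
    refine Fin.lastCases ?_ ?_ i
    · simp
    · intro j
      exact Or.inr ⟨j, by simp⟩
  · rintro (rfl | ⟨i, rfl⟩)
    · exact ⟨Fin.last n, by simp⟩
    · exact ⟨i.castSucc, by simp⟩

variable {K : Type} [Field K] {n m : ℕ}

/-- The row span of a matrix. -/
abbrev rowSpan (N : Matrix (Fin n) (Fin m) K) : Submodule K (Fin m → K) :=
  Submodule.span K (Set.range N)

open scoped Classical in
lemma rank_snoc (N : Matrix (Fin n) (Fin m) K) (v : Fin m → K) :
    (Matrix.of (Fin.snoc N v) : Matrix (Fin (n + 1)) (Fin m) K).rank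
      = if v ∈ rowSpan N then N.rank else N.rank + 1 := by
  rw [rank_eq_finrank_span_row, rank_eq_finrank_span_row]
  have hr : Set.range (Matrix.of (Fin.snoc N v) : Matrix (Fin (n + 1)) (Fin m) K).row
      = insert v (Set.range N.row) := range_snoc _ _
  rw [hr, Submodule.span_insert]
  split_ifs with hv
  · rw [(sup_eq_right (b := Submodule.span K (Set.range N.row))).mpr (Submodule.span_le.mpr (Set.singleton_subset_iff.mpr hv))]
  · have hv0 : v ≠ 0 := fun h => hv (h ▸ zero_mem _)
    have hinf : Submodule.span K {v} ⊓ rowSpan N = ⊥ := by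
      rw [eq_bot_iff]
      rintro x ⟨hx1, hx2⟩
      obtain ⟨c, rfl⟩ := Submodule.mem_span_singleton.mp hx1
      rcases eq_or_ne c 0 with rfl | hc
      · simp
      · exact absurd (by simpa [smul_smul, inv_mul_cancel₀ hc] using
          (rowSpan N).smul_mem c⁻¹ hx2) hv
    have h := Submodule.finrank_sup_add_finrank_inf_eq (Submodule.span K {v}) (rowSpan N)
    rw [hinf, finrank_bot, add_zero, finrank_span_singleton hv0] at h
    exact h.trans (Nat.add_comm 1 _)

lemma ptrace_snoc (N : Matrix (Fin n) (Fin m) K) (v : Fin m → K) (r : ℕ) (hr : r ≤ n) :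
    ptrace r (Matrix.of (Fin.snoc N v) : Matrix (Fin (n + 1)) (Fin m) K) = ptrace r N := by
  unfold ptrace
  refine Finset.sum_congr rfl fun i hi => ?_
  have hin : i < n := lt_of_lt_of_le (Finset.mem_range.mp hi) hr
  by_cases him : i < m
  · rw [dif_pos ⟨hin.trans n.lt_succ_self, him⟩, dif_pos ⟨hin, him⟩]
    have h1 : (⟨i, hin.trans n.lt_succ_self⟩ : Fin (n + 1)) = Fin.castSucc ⟨i, hin⟩ := rfl
    show (Fin.snoc N v : Fin (n + 1) → Fin m → K) ⟨i, _⟩ ⟨i, _⟩ = N ⟨i, hin⟩ ⟨i, him⟩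
    rw [h1]
    exact congrFun (Fin.snoc_castSucc (α := fun _ => Fin m → K) _ _ _) _
  · rw [dif_neg (by tauto), dif_neg (by tauto)]

/-- Splitting off the last row. -/
def snocEquiv (n m : ℕ) (K : Type) [Field K] :
    (Matrix (Fin n) (Fin m) K × (Fin m → K)) ≃ Matrix (Fin (n + 1)) (Fin m) K where
  toFun p := Matrix.of (Fin.snoc p.1 p.2)
  invFun M := (Matrix.of fun i j => M i.castSucc j, fun j => M (Fin.last n) j)
  left_inv := by
    rintro ⟨N, v⟩
    refine Prod.ext ?_ ?_
    · funext i j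
      simp [Matrix.of_apply, Fin.snoc_castSucc]
      exact congrFun (Fin.snoc_castSucc (α := fun _ => Fin m → K) _ _ _) j
    · funext j
      simp [Matrix.of_apply, Fin.snoc_last]
      exact congrFun (Fin.snoc_last (α := fun _ => Fin m → K) _ _) j
  right_inv M := by
    funext i j
    refine Fin.lastCases ?_ ?_ i
    · simp [Matrix.of_apply, Fin.snoc_last]
      exact congrFun (Fin.snoc_last (α := fun _ => Fin m → K) _ _) j
    · intro k
      simp [Matrix.of_apply, Fin.snoc_castSucc]
      exact congrFun (Fin.snoc_castSucc (α := fun _ => Fin m → K) _ _ _) j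

variable [Fintype K]

lemma card_mem (W : Submodule K (Fin m → K)) :
    Nat.card {v : Fin m → K // v ∈ W} = Fintype.card K ^ finrank K W := by
  classical
  rw [Nat.card_eq_fintype_card]
  exact card_eq_pow_finrank

lemma card_not_mem (W : Submodule K (Fin m → K)) :
    Nat.card {v : Fin m → K // v ∉ W} = Fintype.card K ^ m - Fintype.card K ^ finrank K W := by
  classical
  rw [Nat.card_eq_fintype_card, Fintype.card_subtype_compl, ← card_mem W,
    Nat.card_eq_fintype_card]
  congr 1
  simp [Fintype.card_fun]

end Stmt16Aux

open Stmt16Aux Module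

theorem stmt_16 (q t l m r : ℕ) (hq : IsPrimePow q)
    (K : Type) [Field K] [Fintype K] (hK : Fintype.card K = q)
    (ht : 1 ≤ t) (htl : t ≤ l) (hlm : l ≤ m) (hr : 1 ≤ r) (hrl : r < l) :
    wfrak K l m r t =
      q ^ t * wfrak K (l - 1) m r t + (q ^ m - q ^ (t - 1)) * wfrak K (l - 1) m r (t - 1) := by
  classical
  subst hK
  obtain ⟨n, rfl⟩ : ∃ n, l = n + 1 := ⟨l - 1, (Nat.succ_pred_eq_of_pos (ht.trans htl)).symm⟩
  have hrn : r ≤ n := Nat.lt_succ_iff.mp hrl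
  simp only [Nat.add_sub_cancel]
  -- the fiberwise count as a function of the first n rows
  set q := Fintype.card K with hq'
  have key : ∀ N : Matrix (Fin n) (Fin m) K,
      Nat.card {v : Fin m → K //
        (Matrix.of (Fin.snoc N v) : Matrix (Fin (n + 1)) (Fin m) K).rank = t ∧
          ptrace r (Matrix.of (Fin.snoc N v) : Matrix (Fin (n + 1)) (Fin m) K) ≠ 0}
      = (if N.rank = t ∧ ptrace r N ≠ 0 then q ^ t else 0)
        + (if N.rank = t - 1 ∧ ptrace r N ≠ 0 then q ^ m - q ^ (t - 1) else 0) := by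
    intro N
    have hWr : finrank K (rowSpan N) = N.rank := (rank_eq_finrank_span_row N).symm
    have hiff : ∀ v : Fin m → K,
        ((Matrix.of (Fin.snoc N v) : Matrix (Fin (n + 1)) (Fin m) K).rank = t ∧
          ptrace r (Matrix.of (Fin.snoc N v) : Matrix (Fin (n + 1)) (Fin m) K) ≠ 0)
        ↔ ((N.rank = t ∧ ptrace r N ≠ 0 ∧ v ∈ rowSpan N)
            ∨ (N.rank = t - 1 ∧ ptrace r N ≠ 0 ∧ v ∉ rowSpan N)) := by
      intro v
      rw [rank_snoc, ptrace_snoc N v r hrn]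
      split_ifs with hv
      · constructor
        · rintro ⟨h1, h2⟩; exact Or.inl ⟨h1, h2, hv⟩
        · rintro (⟨h1, h2, _⟩ | ⟨_, _, h3⟩)
          · exact ⟨h1, h2⟩
          · exact absurd hv h3
      · constructor
        · rintro ⟨h1, h2⟩; exact Or.inr ⟨by omega, h2, hv⟩
        · rintro (⟨_, _, h3⟩ | ⟨h1, h2, _⟩)
          · exact absurd h3 hv
          · exact ⟨by omega, h2⟩
    rw [Nat.card_congr (Equiv.subtypeEquivRight hiff)]
    by_cases h1 : N.rank = t ∧ ptrace r N ≠ 0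
    · have h2 : ¬(N.rank = t - 1 ∧ ptrace r N ≠ 0) := by
        rintro ⟨h2, -⟩; omega
      rw [if_pos h1, if_neg h2, add_zero]
      rw [Nat.card_congr (Equiv.subtypeEquivRight (q := fun v => v ∈ rowSpan N)
        (fun v => by tauto))]
      rw [card_mem, hWr, h1.1]
    · by_cases h2 : N.rank = t - 1 ∧ ptrace r N ≠ 0
      · rw [if_neg h1, if_pos h2, zero_add]
        rw [Nat.card_congr (Equiv.subtypeEquivRight (q := fun v => v ∉ rowSpan N)
          (fun v => by tauto))]
        rw [card_not_mem, hWr, h2.1]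
      · rw [if_neg h1, if_neg h2, add_zero]
        have : IsEmpty {v : Fin m → K // (N.rank = t ∧ ptrace r N ≠ 0 ∧ v ∈ rowSpan N)
            ∨ (N.rank = t - 1 ∧ ptrace r N ≠ 0 ∧ v ∉ rowSpan N)} := by
          constructor
          rintro ⟨v, (hv | hv)⟩
          · exact h1 ⟨hv.1, hv.2.1⟩
          · exact h2 ⟨hv.1, hv.2.1⟩
        simp [Nat.card_of_isEmpty]
  -- assemble
  set P : Matrix (Fin (n + 1)) (Fin m) K → Prop :=
    fun M => M.rank = t ∧ ptrace r M ≠ 0 with hP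
  set p : Matrix (Fin n) (Fin m) K → (Fin m → K) → Prop :=
    fun N v => (Matrix.of (Fin.snoc N v) : Matrix (Fin (n + 1)) (Fin m) K).rank = t ∧
      ptrace r (Matrix.of (Fin.snoc N v) : Matrix (Fin (n + 1)) (Fin m) K) ≠ 0 with hp
  have F : {M : Matrix (Fin (n + 1)) (Fin m) K // P M} ≃
      Σ N : Matrix (Fin n) (Fin m) K, {v : Fin m → K // p N v} :=
    (Equiv.subtypeEquiv (snocEquiv n m K) (fun _ => Iff.rfl)).symm.trans
      (Equiv.subtypeProdEquivSigmaSubtype p)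
  have h1 : wfrak K (n + 1) m r t = ∑ N : Matrix (Fin n) (Fin m) K, Nat.card {v // p N v} := by
    rw [wfrak, Nat.card_congr F, Nat.card_eq_fintype_card, Fintype.card_sigma]
    exact Finset.sum_congr rfl fun N _ => (Nat.card_eq_fintype_card).symm
  rw [h1]
  have h2 : ∀ N : Matrix (Fin n) (Fin m) K, Nat.card {v // p N v}
      = (if N.rank = t ∧ ptrace r N ≠ 0 then q ^ t else 0)
        + (if N.rank = t - 1 ∧ ptrace r N ≠ 0 then q ^ m - q ^ (t - 1) else 0) :=
    fun N => key N
  rw [Finset.sum_congr rfl fun N _ => h2 N, Finset.sum_add_distrib]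
  have hcard : ∀ (s : ℕ), wfrak K n m r s
      = (Finset.univ.filter fun N : Matrix (Fin n) (Fin m) K =>
          N.rank = s ∧ ptrace r N ≠ 0).card := by
    intro s
    rw [wfrak, Nat.card_eq_fintype_card, Fintype.card_subtype]
  rw [← Finset.sum_filter, ← Finset.sum_filter, Finset.sum_const, Finset.sum_const,
    hcard t, hcard (t - 1), smul_eq_mul, smul_eq_mul, mul_comm, mul_comm ((Finset.univ.filter _).card)]
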